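/- Let c ∈ ℝ and let φ, ρ : [0,π] → ℝ be continuously differentiable with φ(0) = φ(π) = ρ(0) = ρ(π) = 0. Set φ_n^D(x) := √(2/π) sin(nx) and ψ_n(x) := (n²+c²)^{−1/2} √(2/π)(n cos(nx) + c sin(nx)); define γ_n^D(f) := ∫₀^π f φ_n^D and γ_n^R(f) := ∫₀^π f ψ_n. For t > 0 set β_D(t) := ∑_{n=1}^∞ e^{−t(n²+c²)} γ_n^D(φ) γ_n^D(ρ). Then for every t > 0 the series converges, β_D is differentiable at t, and β_D'(t) = −∑_{n=1}^∞ e^{−t(n²+c²)} γ_n^R(φ' + cφ) γ_n^R(ρ' + cρ). -/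

import Mathlib

noncomputable section

/-- Fourier coefficient against the Dirichlet eigenfunction `√(2/π) sin(n x)` on `[0,π]`. -/
def gammaD (n : ℕ) (f : ℝ → ℝ) : ℝ :=
  ∫ x in (0 : ℝ)..Real.pi, f x * (Real.sqrt (2 / Real.pi) * Real.sin ((n : ℝ) * x))

/-- The Robin eigenfunctions `ψ_n = (n²+c²)^{-1/2} A φ_n^D` on `[0,π]`. -/
def robinEigen (c : ℝ) (n : ℕ) (x : ℝ) : ℝ :=
  (Real.sqrt ((n : ℝ) ^ 2 + c ^ 2))⁻¹ * Real.sqrt (2 / Real.pi) *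
    ((n : ℝ) * Real.cos ((n : ℝ) * x) + c * Real.sin ((n : ℝ) * x))

/-- Fourier coefficient against the Robin eigenfunction `ψ_n` on `[0,π]`. -/
def gammaR (c : ℝ) (n : ℕ) (f : ℝ → ℝ) : ℝ :=
  ∫ x in (0 : ℝ)..Real.pi, f x * robinEigen c n x

open Set intervalIntegral Real MeasureTheory

lemma gammaR_A_eq (c : ℝ) (f : ℝ → ℝ) (hf : ContDiffOn ℝ 1 f (Set.Icc 0 Real.pi))
    (h0 : f 0 = 0) (hπ : f Real.pi = 0) (n : ℕ) (hn : 0 < n) :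
    gammaR c n (fun x => deriv f x + c * f x)
      = Real.sqrt ((n : ℝ) ^ 2 + c ^ 2) * gammaD n f := by
  have hπ0 : (0:ℝ) < Real.pi := Real.pi_pos
  set L : ℝ := (n : ℝ) ^ 2 + c ^ 2 with hL
  have hLpos : 0 < L := by
    have : (1:ℝ) ≤ (n:ℝ) := by exact_mod_cast hn
    positivity
  set g : ℝ → ℝ := derivWithin f (Set.Icc 0 Real.pi) with hg
  have hgc : ContinuousOn g (Set.Icc 0 Real.pi) :=
    hf.continuousOn_derivWithin (uniqueDiffOn_Icc hπ0) le_rfl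
  have hfc : ContinuousOn f (Set.Icc 0 Real.pi) := hf.continuousOn
  have hd : ∀ x ∈ Set.Ioo (0:ℝ) Real.pi, HasDerivAt f (g x) x := by
    intro x hx
    have hmem : Set.Icc (0:ℝ) Real.pi ∈ nhds x := Icc_mem_nhds hx.1 hx.2
    have hdi : DifferentiableAt ℝ f x :=
      ((hf.differentiableOn one_ne_zero) x (Set.Ioo_subset_Icc_self hx)).differentiableAt hmem
    have : g x = deriv f x := derivWithin_of_mem_nhds hmem
    rw [this]
    exact hdi.hasDerivAt
  -- E is the unscaled robin eigenfunction
  set E : ℝ → ℝ := fun x => (n : ℝ) * Real.cos ((n:ℝ) * x) + c * Real.sin ((n:ℝ) * x) with hE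
  have hEc : Continuous E := by fun_prop
  have hE' : ∀ x : ℝ, HasDerivAt E (c * n * Real.cos ((n:ℝ)*x) - (n:ℝ)^2 * Real.sin ((n:ℝ)*x)) x := by
    intro x
    have h1 : HasDerivAt (fun x : ℝ => (n:ℝ) * x) (n:ℝ) x := by
      simpa using (hasDerivAt_id x).const_mul (n:ℝ)
    have hcos : HasDerivAt (fun x : ℝ => Real.cos ((n:ℝ)*x)) (-Real.sin ((n:ℝ)*x) * n) x := h1.cos
    have hsin : HasDerivAt (fun x : ℝ => Real.sin ((n:ℝ)*x)) (Real.cos ((n:ℝ)*x) * n) x := h1.sin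
    have := (hcos.const_mul (n:ℝ)).add (hsin.const_mul c)
    refine this.congr_deriv ?_
    ring
  -- FTC for H := f * E
  have hFTC : ∫ x in (0:ℝ)..Real.pi,
      ((g x + c * f x) * E x - L * (f x * Real.sin ((n:ℝ)*x))) = 0 := by
    have hcont : ContinuousOn (fun x => f x * E x) (Set.Icc 0 Real.pi) :=
      hfc.mul hEc.continuousOn
    have hderiv : ∀ x ∈ Set.Ioo (0:ℝ) Real.pi,
        HasDerivAt (fun x => f x * E x)
          ((g x + c * f x) * E x - L * (f x * Real.sin ((n:ℝ)*x))) x := by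
      intro x hx
      have := (hd x hx).mul (hE' x)
      refine this.congr_deriv ?_
      simp only [hE, hL]
      ring
    have hint : IntervalIntegrable
        (fun x => (g x + c * f x) * E x - L * (f x * Real.sin ((n:ℝ)*x))) volume 0 Real.pi := by
      apply ContinuousOn.intervalIntegrable
      rw [Set.uIcc_of_le hπ0.le]
      exact ((hgc.add (hfc.const_smul c)).mul hEc.continuousOn).sub
        ((hfc.mul (by fun_prop)).const_smul L)
    have := integral_eq_sub_of_hasDerivAt_of_le hπ0.le hcont hderiv hint
    rw [this, hπ, h0]
    ring
  have hint1 : IntervalIntegrable (fun x => (g x + c * f x) * E x) volume 0 Real.pi := by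
    apply ContinuousOn.intervalIntegrable
    rw [Set.uIcc_of_le hπ0.le]
    exact (hgc.add (hfc.const_smul c)).mul hEc.continuousOn
  have hint2 : IntervalIntegrable (fun x => L * (f x * Real.sin ((n:ℝ)*x))) volume 0 Real.pi := by
    apply ContinuousOn.intervalIntegrable
    rw [Set.uIcc_of_le hπ0.le]
    exact (hfc.mul (by fun_prop)).const_smul L
  have hIBP : ∫ x in (0:ℝ)..Real.pi, (g x + c * f x) * E x
      = L * ∫ x in (0:ℝ)..Real.pi, f x * Real.sin ((n:ℝ)*x) := by
    have hsub : (∫ x in (0:ℝ)..Real.pi, (g x + c * f x) * E x) -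
        (∫ x in (0:ℝ)..Real.pi, L * (f x * Real.sin ((n:ℝ)*x))) = 0 := by
      rw [← intervalIntegral.integral_sub hint1 hint2]
      exact hFTC
    have h2 : ∫ x in (0:ℝ)..Real.pi, L * (f x * Real.sin ((n:ℝ)*x))
        = L * ∫ x in (0:ℝ)..Real.pi, f x * Real.sin ((n:ℝ)*x) :=
      intervalIntegral.integral_const_mul _ _
    rw [← h2]
    exact sub_eq_zero.mp hsub
  -- replace deriv f by g in gammaR
  have hae : ∀ᵐ x ∂(volume : Measure ℝ), x ∈ Set.uIoc (0:ℝ) Real.pi →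
      (deriv f x + c * f x) * robinEigen c n x = (g x + c * f x) * robinEigen c n x := by
    have hsing : ∀ᵐ x ∂(volume : Measure ℝ), x ≠ Real.pi := by
      have h := (MeasureTheory.measure_eq_zero_iff_ae_notMem (μ := (volume : Measure ℝ))
        (s := {Real.pi})).mp Real.volume_singleton
      simpa using h
    filter_upwards [hsing] with x hx hmem
    rw [Set.uIoc_of_le hπ0.le] at hmem
    have hxIoo : x ∈ Set.Ioo (0:ℝ) Real.pi := ⟨hmem.1, lt_of_le_of_ne hmem.2 hx⟩
    rw [(hd x hxIoo).deriv]
  have hgR : gammaR c n (fun x => deriv f x + c * f x)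
      = ∫ x in (0:ℝ)..Real.pi, (g x + c * f x) * robinEigen c n x := by
    exact intervalIntegral.integral_congr_ae hae
  rw [hgR]
  have hrE : ∀ x, robinEigen c n x = ((Real.sqrt L)⁻¹ * Real.sqrt (2 / Real.pi)) * E x := by
    intro x; simp [robinEigen, hE, hL]
  have : ∫ x in (0:ℝ)..Real.pi, (g x + c * f x) * robinEigen c n x
      = ((Real.sqrt L)⁻¹ * Real.sqrt (2 / Real.pi)) *
          ∫ x in (0:ℝ)..Real.pi, (g x + c * f x) * E x := by
    rw [← intervalIntegral.integral_const_mul]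
    apply intervalIntegral.integral_congr
    intro x _
    dsimp only
    rw [hrE x]; ring
  rw [this, hIBP]
  have hgD : gammaD n f = Real.sqrt (2 / Real.pi) * ∫ x in (0:ℝ)..Real.pi, f x * Real.sin ((n:ℝ)*x) := by
    rw [gammaD, ← intervalIntegral.integral_const_mul]
    apply intervalIntegral.integral_congr
    intro x _; ring
  rw [hgD]
  have hs : Real.sqrt L * Real.sqrt L = L := Real.mul_self_sqrt hLpos.le
  have hsne : Real.sqrt L ≠ 0 := by positivity
  have hs' : Real.sqrt ((n:ℝ)^2+c^2) * Real.sqrt ((n:ℝ)^2+c^2) = (n:ℝ)^2+c^2 := hs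
  field_simp
  linear_combination (-(∫ x in (0:ℝ)..Real.pi, f x * Real.sin ((n:ℝ)*x))) * hs +
    (-(∫ x in (0:ℝ)..Real.pi, f x * Real.sin ((n:ℝ)*x))) * hL

lemma gammaD_bound (f : ℝ → ℝ) (hf : ContinuousOn f (Set.Icc 0 Real.pi)) :
    ∃ C : ℝ, 0 ≤ C ∧ ∀ n : ℕ, |gammaD n f| ≤ C := by
  obtain ⟨M, hM⟩ := isCompact_Icc.exists_bound_of_continuousOn hf
  have hM0 : 0 ≤ M := le_trans (norm_nonneg _) (hM 0 ⟨le_rfl, Real.pi_pos.le⟩)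
  refine ⟨M * Real.sqrt (2 / Real.pi) * |Real.pi - 0|, by positivity, fun n => ?_⟩
  have hb : ∀ x ∈ Set.uIoc (0:ℝ) Real.pi,
      ‖f x * (Real.sqrt (2 / Real.pi) * Real.sin ((n:ℝ) * x))‖ ≤ M * Real.sqrt (2 / Real.pi) := by
    intro x hx
    rw [Set.uIoc_of_le Real.pi_pos.le] at hx
    have hfx : |f x| ≤ M := hM x ⟨hx.1.le, hx.2⟩
    have hsin : |Real.sin ((n:ℝ) * x)| ≤ 1 :=
      abs_le.mpr ⟨Real.neg_one_le_sin _, Real.sin_le_one _⟩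
    rw [Real.norm_eq_abs, abs_mul, abs_mul, abs_of_nonneg (Real.sqrt_nonneg _)]
    calc |f x| * (Real.sqrt (2 / Real.pi) * |Real.sin ((n:ℝ) * x)|)
        ≤ M * (Real.sqrt (2 / Real.pi) * 1) := by
          apply mul_le_mul hfx ?_ (by positivity) hM0
          exact mul_le_mul_of_nonneg_left hsin (Real.sqrt_nonneg _)
      _ = M * Real.sqrt (2 / Real.pi) := by ring
  have := intervalIntegral.norm_integral_le_of_norm_le_const hb
  simpa [gammaD] using this

lemma exp_term_le (t c : ℝ) (ht : 0 < t) (n : ℕ) :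
    Real.exp (-t * (((n:ℝ) + 1)^2 + c^2)) ≤ Real.exp (-t * c^2) * Real.exp (-t) ^ n := by
  rw [← Real.exp_nat_mul, ← Real.exp_add]
  apply Real.exp_le_exp.mpr
  have h : (0:ℝ) ≤ (n:ℝ) := n.cast_nonneg
  nlinarith [mul_nonneg ht.le (sq_nonneg (n:ℝ)), mul_nonneg ht.le h]

lemma yexp_le (y : ℝ) (hy : 0 ≤ y) : y * Real.exp (-y) ≤ 1 := by
  rw [Real.exp_neg]
  have h2 : y ≤ Real.exp y := by linarith [Real.add_one_le_exp y]
  have h3 : 0 < Real.exp y := Real.exp_pos y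
  calc y * (Real.exp y)⁻¹ ≤ Real.exp y * (Real.exp y)⁻¹ :=
        mul_le_mul_of_nonneg_right h2 (inv_nonneg.mpr h3.le)
    _ = 1 := mul_inv_cancel₀ h3.ne'

lemma Lexp_le (t L : ℝ) (ht : 0 < t) (hL : 0 ≤ L) :
    L * Real.exp (-(t/2) * L) ≤ 4/t * Real.exp (-(t/4) * L) := by
  have haux : ((t/4) * L) * Real.exp (-((t/4) * L)) ≤ 1 := yexp_le _ (by positivity)
  have heq2 : -((t/4) * L) = -(t/4) * L := by ring
  rw [heq2] at haux
  have heq : Real.exp (-(t/2) * L) = Real.exp (-(t/4) * L) * Real.exp (-(t/4) * L) := by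
    rw [← Real.exp_add]; ring_nf
  have he := (Real.exp_pos (-(t/4) * L)).le
  rw [heq, div_mul_eq_mul_div, le_div_iff₀ ht]
  nlinarith [mul_le_mul_of_nonneg_right haux he]

set_option maxHeartbeats 1600000 in
theorem dirichlet_heat_content_deriv_robin (c : ℝ) (φ ρ : ℝ → ℝ)
    (hφ : ContDiffOn ℝ 1 φ (Set.Icc 0 Real.pi)) (hρ : ContDiffOn ℝ 1 ρ (Set.Icc 0 Real.pi))
    (hφ0 : φ 0 = 0) (hφπ : φ Real.pi = 0) (hρ0 : ρ 0 = 0) (hρπ : ρ Real.pi = 0) :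
    ∀ t : ℝ, 0 < t →
      (Summable fun n : ℕ =>
        Real.exp (-t * (((n : ℝ) + 1) ^ 2 + c ^ 2)) *
          gammaD (n + 1) φ * gammaD (n + 1) ρ) ∧
      HasDerivAt
        (fun s : ℝ => ∑' n : ℕ,
          Real.exp (-s * (((n : ℝ) + 1) ^ 2 + c ^ 2)) *
            gammaD (n + 1) φ * gammaD (n + 1) ρ)
        (-∑' n : ℕ,
          Real.exp (-t * (((n : ℝ) + 1) ^ 2 + c ^ 2)) *
            gammaR c (n + 1) (fun x => deriv φ x + c * φ x) *
            gammaR c (n + 1) (fun x => deriv ρ x + c * ρ x))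
        t := by
  intro t ht
  obtain ⟨Cφ, hCφ0, hCφ⟩ := gammaD_bound φ hφ.continuousOn
  obtain ⟨Cρ, hCρ0, hCρ⟩ := gammaD_bound ρ hρ.continuousOn
  have hK0 : 0 ≤ Cφ * Cρ := mul_nonneg hCφ0 hCρ0
  have habK : ∀ n : ℕ, |gammaD (n+1) φ * gammaD (n+1) ρ| ≤ Cφ * Cρ := fun n => by
    rw [abs_mul]; exact mul_le_mul (hCφ _) (hCρ _) (abs_nonneg _) hCφ0
  have hgeom : ∀ a : ℝ, 0 < a → Summable (fun n : ℕ => Real.exp (-a) ^ n) := fun a ha =>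
    summable_geometric_of_lt_one (Real.exp_nonneg _) (Real.exp_lt_one_iff.mpr (by linarith))
  have hsum : ∀ s : ℝ, 0 < s → Summable (fun n : ℕ =>
      Real.exp (-s * (((n:ℝ)+1)^2 + c^2)) * gammaD (n+1) φ * gammaD (n+1) ρ) := by
    intro s hs
    apply Summable.of_norm_bounded
      (g := fun n : ℕ => (Real.exp (-s*c^2) * (Cφ * Cρ)) * Real.exp (-s) ^ n)
      ((hgeom s hs).mul_left _)
    intro n
    rw [Real.norm_eq_abs, mul_assoc, abs_mul, Real.abs_exp]
    calc Real.exp (-s*(((n:ℝ)+1)^2+c^2)) * |gammaD (n+1) φ * gammaD (n+1) ρ|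
        ≤ (Real.exp (-s*c^2) * Real.exp (-s)^n) * (Cφ * Cρ) :=
          mul_le_mul (exp_term_le s c hs n) (habK n) (abs_nonneg _) (by positivity)
      _ = Real.exp (-s*c^2) * (Cφ * Cρ) * Real.exp (-s)^n := by ring
  refine ⟨hsum t ht, ?_⟩
  have ht4 : (0:ℝ) < t/4 := by linarith
  have key : HasDerivAt
      (fun s : ℝ => ∑' n : ℕ,
        Real.exp (-s * (((n : ℝ) + 1) ^ 2 + c ^ 2)) * gammaD (n + 1) φ * gammaD (n + 1) ρ)
      (∑' n : ℕ,
        Real.exp (-t * (((n : ℝ) + 1) ^ 2 + c ^ 2)) * (-((((n : ℝ) + 1) ^ 2 + c ^ 2))) *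
          gammaD (n + 1) φ * gammaD (n + 1) ρ) t := by
    apply hasDerivAt_tsum_of_isPreconnected
      (u := fun n : ℕ => (4/t * (Real.exp (-(t/4)*c^2) * (Cφ * Cρ))) * Real.exp (-(t/4)) ^ n)
      (g := fun (n : ℕ) (s : ℝ) =>
        Real.exp (-s * (((n : ℝ) + 1) ^ 2 + c ^ 2)) * gammaD (n + 1) φ * gammaD (n + 1) ρ)
      (g' := fun (n : ℕ) (y : ℝ) =>
        Real.exp (-y * (((n : ℝ) + 1) ^ 2 + c ^ 2)) * (-((((n : ℝ) + 1) ^ 2 + c ^ 2))) *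
          gammaD (n + 1) φ * gammaD (n + 1) ρ)
      ((hgeom (t/4) ht4).mul_left _) isOpen_Ioi isPreconnected_Ioi
      ?_ ?_ (Set.mem_Ioi.mpr (half_lt_self ht)) (hsum t ht) (Set.mem_Ioi.mpr (half_lt_self ht))
    · intro n y _
      have h1 : HasDerivAt (fun s : ℝ => -s * (((n : ℝ) + 1) ^ 2 + c ^ 2))
          (-((((n : ℝ) + 1) ^ 2 + c ^ 2))) y := by
        have hfe : (fun s : ℝ => -s * (((n : ℝ) + 1) ^ 2 + c ^ 2))
            = fun s : ℝ => -(s * (((n : ℝ) + 1) ^ 2 + c ^ 2)) := by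
          funext s; ring
        rw [hfe]
        have h2 := ((hasDerivAt_id y).mul_const (((n : ℝ) + 1) ^ 2 + c ^ 2)).neg
        simp only [one_mul] at h2
        exact h2
      exact (h1.exp.mul_const (gammaD (n + 1) φ)).mul_const (gammaD (n + 1) ρ)
    · intro n y hy
      have hy2 : t/2 ≤ y := (Set.mem_Ioi.mp hy).le
      set L : ℝ := ((n : ℝ) + 1) ^ 2 + c ^ 2 with hLdef
      have hL0 : (0:ℝ) ≤ L := by positivity
      have hexp1 : Real.exp (-y * L) ≤ Real.exp (-(t/2) * L) := by
        apply Real.exp_le_exp.mpr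
        nlinarith
      rw [Real.norm_eq_abs, abs_mul, abs_mul, abs_mul, Real.abs_exp, abs_neg,
        abs_of_nonneg hL0]
      calc Real.exp (-y * L) * L * |gammaD (n+1) φ| * |gammaD (n+1) ρ|
          ≤ Real.exp (-(t/2) * L) * L * (Cφ * Cρ) := by
            have h1 : |gammaD (n+1) φ| * |gammaD (n+1) ρ| ≤ Cφ * Cρ :=
              mul_le_mul (hCφ _) (hCρ _) (abs_nonneg _) hCφ0
            have h2 : Real.exp (-y * L) * L ≤ Real.exp (-(t/2) * L) * L :=
              mul_le_mul_of_nonneg_right hexp1 hL0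
            calc Real.exp (-y * L) * L * |gammaD (n+1) φ| * |gammaD (n+1) ρ|
                = (Real.exp (-y * L) * L) * (|gammaD (n+1) φ| * |gammaD (n+1) ρ|) := by ring
              _ ≤ (Real.exp (-(t/2) * L) * L) * (Cφ * Cρ) :=
                  mul_le_mul h2 h1 (by positivity)
                    (mul_nonneg (Real.exp_pos _).le hL0)
              _ = Real.exp (-(t/2) * L) * L * (Cφ * Cρ) := by ring
        _ ≤ (4/t * Real.exp (-(t/4) * L)) * (Cφ * Cρ) := by
            have := Lexp_le t L ht hL0
            apply mul_le_mul_of_nonneg_right _ hK0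
            calc Real.exp (-(t/2) * L) * L = L * Real.exp (-(t/2) * L) := by ring
              _ ≤ 4/t * Real.exp (-(t/4) * L) := this
        _ ≤ (4/t * (Real.exp (-(t/4)*c^2) * (Cφ * Cρ))) * Real.exp (-(t/4)) ^ n := by
            have h3 : Real.exp (-(t/4) * L) ≤ Real.exp (-(t/4)*c^2) * Real.exp (-(t/4)) ^ n :=
              exp_term_le (t/4) c ht4 n
            calc (4/t * Real.exp (-(t/4) * L)) * (Cφ * Cρ)
                ≤ (4/t * (Real.exp (-(t/4)*c^2) * Real.exp (-(t/4)) ^ n)) * (Cφ * Cρ) := by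
                  apply mul_le_mul_of_nonneg_right _ hK0
                  exact mul_le_mul_of_nonneg_left h3 (by positivity)
              _ = (4/t * (Real.exp (-(t/4)*c^2) * (Cφ * Cρ))) * Real.exp (-(t/4)) ^ n := by ring
  have hterm : ∀ n : ℕ,
      Real.exp (-t * (((n : ℝ) + 1) ^ 2 + c ^ 2)) *
          gammaR c (n + 1) (fun x => deriv φ x + c * φ x) *
          gammaR c (n + 1) (fun x => deriv ρ x + c * ρ x)
      = -(Real.exp (-t * (((n : ℝ) + 1) ^ 2 + c ^ 2)) * (-((((n : ℝ) + 1) ^ 2 + c ^ 2))) *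
          gammaD (n + 1) φ * gammaD (n + 1) ρ) := by
    intro n
    rw [gammaR_A_eq c φ hφ hφ0 hφπ (n+1) (Nat.succ_pos n),
      gammaR_A_eq c ρ hρ hρ0 hρπ (n+1) (Nat.succ_pos n)]
    have hs : Real.sqrt ((((n+1 : ℕ)) : ℝ)^2 + c^2) * Real.sqrt ((((n+1 : ℕ)) : ℝ)^2 + c^2)
        = (((n+1 : ℕ)) : ℝ)^2 + c^2 := Real.mul_self_sqrt (by positivity)
    push_cast at hs ⊢
    linear_combination (Real.exp (-t * (((n : ℝ) + 1) ^ 2 + c ^ 2)) *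
      gammaD (n + 1) φ * gammaD (n + 1) ρ) * hs
  have hneg : (-∑' n : ℕ,
      Real.exp (-t * (((n : ℝ) + 1) ^ 2 + c ^ 2)) *
        gammaR c (n + 1) (fun x => deriv φ x + c * φ x) *
        gammaR c (n + 1) (fun x => deriv ρ x + c * ρ x))
      = ∑' n : ℕ,
        Real.exp (-t * (((n : ℝ) + 1) ^ 2 + c ^ 2)) * (-((((n : ℝ) + 1) ^ 2 + c ^ 2))) *
          gammaD (n + 1) φ * gammaD (n + 1) ρ := by
    rw [← tsum_neg]
    exact tsum_congr fun n => by rw [hterm n, neg_neg]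
  rw [hneg]
  exact key
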